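/- For the star VCSP fitness f defined on 2n+1 Boolean variables as above, the maximum fitness value equals n² + 4n + 1 (achieved from starting fitness 0 at the all-zeros assignment by a length-(n²+4n+1) ascent increasing by 1 per step). -/

import Mathlib

/-- Fitness of the star VCSP on `2n+1` Boolean variables: left block `L`
at indices `0,…,n-1` (representing `1,…,n`), center `c` at index `n`, and
right block `R` at indices `n+1,…,2n`. -/
def starFitness (n : ℕ) (x : Fin (2 * n + 1) → Bool) : ℤ :=
  (∑ w : Fin n,
      if x ⟨n, by omega⟩ ≠ x ⟨n + 1 + w.val, by have := w.isLt; omega⟩ then 1 else 0)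
  + (if x ⟨n, by omega⟩ = true then (n : ℤ) + 1 else 0)
  + (∑ u : Fin n,
      if (n - (u.val + 1)) % 2 = 0 then
        (if x ⟨u.val, by have := u.isLt; omega⟩ = true ∧ x ⟨n, by omega⟩ = false
          then 2 * (n : ℤ) + 2 else 0)
      else
        (if x ⟨u.val, by have := u.isLt; omega⟩ = true ∧ x ⟨n, by omega⟩ = true
          then 2 * (n : ℤ) + 2 else 0))
  + (∑ u : Fin n, if x ⟨u.val, by have := u.isLt; omega⟩ = true then 1 else 0)

lemma star_sum_if_even (a b : ℤ) (n : ℕ) :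
    (∑ k ∈ Finset.range n, if k % 2 = 0 then a else b)
      = ((n + 1) / 2 : ℕ) * a + (n / 2 : ℕ) * b := by
  induction n with
  | zero => simp
  | succ n ih =>
    rw [Finset.sum_range_succ, ih]
    rcases Nat.even_or_odd n with ⟨m, rfl⟩ | ⟨m, rfl⟩
    · have h1 : (m + m + 1 + 1) / 2 = m + 1 := by omega
      have h2 : (m + m + 1) / 2 = m := by omega
      have h3 : (m + m) / 2 = m := by omega
      have h4 : (m + m) % 2 = 0 := by omega
      rw [h1, h2, h3, if_pos h4]
      push_cast; ring
    · have h1 : (2 * m + 1 + 1 + 1) / 2 = m + 1 := by omega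
      have h2 : (2 * m + 1 + 1) / 2 = m + 1 := by omega
      have h3 : (2 * m + 1) / 2 = m := by omega
      have h4 : ¬ (2 * m + 1) % 2 = 0 := by omega
      rw [h1, h2, h3, if_neg h4]
      push_cast; ring

lemma star_sum_parity (a b : ℤ) (n : ℕ) :
    (∑ u : Fin n, if (n - (u.val + 1)) % 2 = 0 then a else b)
      = ((n + 1) / 2 : ℕ) * a + (n / 2 : ℕ) * b := by
  rw [Fin.sum_univ_eq_sum_range (fun k => if (n - (k + 1)) % 2 = 0 then a else b) n]
  rw [← Finset.sum_range_reflect]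
  rw [Finset.sum_congr rfl (fun k hk => ?_), star_sum_if_even]
  simp only [Finset.mem_range] at hk
  have h : n - (n - 1 - k + 1) = k := by omega
  rw [h]

lemma star_sum_le (n : ℕ) (f : Fin n → ℤ) (a : ℤ) (hf : ∀ u, f u ≤ a) :
    (∑ u : Fin n, f u) ≤ (n : ℤ) * a := by
  calc (∑ u : Fin n, f u) ≤ ∑ _u : Fin n, a := Finset.sum_le_sum fun u _ => hf u
    _ = (n : ℤ) * a := by simp [mul_comm]

lemma star_ub (n : ℕ) (x : Fin (2 * n + 1) → Bool) :
    starFitness n x ≤ (n : ℤ) ^ 2 + 4 * n + 1 := by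
  unfold starFitness
  by_cases hc : x ⟨n, by omega⟩ = true
  · simp only [hc]
    simp only [ne_eq, Bool.true_eq_false, and_false, if_false, if_pos rfl, and_true,
      if_true]
    have h1 : (∑ w : Fin n,
        if ¬true = x ⟨n + 1 + w.val, by have := w.isLt; omega⟩ then (1:ℤ) else 0)
        ≤ (n : ℤ) * 1 :=
      star_sum_le n _ 1 (fun u => by split_ifs <;> norm_num)
    have h4 : (∑ u : Fin n,
        if x ⟨u.val, by have := u.isLt; omega⟩ = true then (1:ℤ) else 0)
        ≤ (n : ℤ) * 1 :=
      star_sum_le n _ 1 (fun u => by split_ifs <;> norm_num)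
    have h3 : (∑ u : Fin n,
        if (n - (u.val + 1)) % 2 = 0 then (0 : ℤ)
        else if x ⟨u.val, by have := u.isLt; omega⟩ = true then 2 * (n : ℤ) + 2 else 0)
        ≤ (n / 2 : ℕ) * (2 * (n : ℤ) + 2) := by
      calc _ ≤ ∑ u : Fin n,
            (if (n - (u.val + 1)) % 2 = 0 then (0 : ℤ) else 2 * (n : ℤ) + 2) :=
              Finset.sum_le_sum (fun u _ => by split_ifs <;> omega)
        _ = _ := by rw [star_sum_parity]; ring
    have hd : 2 * ((n / 2 : ℕ) : ℤ) ≤ n := by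
      have : 2 * (n / 2) ≤ n := by omega
      exact_mod_cast this
    nlinarith [h1, h3, h4,
      mul_le_mul_of_nonneg_right hd (by positivity : (0:ℤ) ≤ (n:ℤ) + 1)]
  · simp only [Bool.not_eq_true] at hc
    simp only [hc]
    simp only [ne_eq, Bool.false_eq_true, and_false, if_false, and_true]
    have h1 : (∑ w : Fin n,
        if ¬false = x ⟨n + 1 + w.val, by have := w.isLt; omega⟩ then (1:ℤ) else 0)
        ≤ (n : ℤ) * 1 :=
      star_sum_le n _ 1 (fun u => by split_ifs <;> norm_num)
    have h4 : (∑ u : Fin n,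
        if x ⟨u.val, by have := u.isLt; omega⟩ = true then (1:ℤ) else 0)
        ≤ (n : ℤ) * 1 :=
      star_sum_le n _ 1 (fun u => by split_ifs <;> norm_num)
    have h3 : (∑ u : Fin n,
        if (n - (u.val + 1)) % 2 = 0 then
          (if x ⟨u.val, by have := u.isLt; omega⟩ = true then 2 * (n : ℤ) + 2 else 0)
        else (0 : ℤ))
        ≤ ((n + 1) / 2 : ℕ) * (2 * (n : ℤ) + 2) := by
      calc _ ≤ ∑ u : Fin n,
            (if (n - (u.val + 1)) % 2 = 0 then 2 * (n : ℤ) + 2 else (0 : ℤ)) :=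
              Finset.sum_le_sum (fun u _ => by split_ifs <;> omega)
        _ = _ := by rw [star_sum_parity]; ring
    have hd : 2 * (((n + 1) / 2 : ℕ) : ℤ) ≤ (n : ℤ) + 1 := by
      have : 2 * ((n + 1) / 2) ≤ n + 1 := by omega
      exact_mod_cast this
    nlinarith [h1, h3, h4,
      mul_le_mul_of_nonneg_right hd (by positivity : (0:ℤ) ≤ (n:ℤ) + 1)]

/-- Witness assignment achieving the maximum. -/
def starWitness (n : ℕ) : Fin (2 * n + 1) → Bool :=
  fun i => if i.val < n then true
    else if i.val = n then decide (n % 2 = 0) else !(decide (n % 2 = 0))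

lemma star_witness_val (n : ℕ) :
    starFitness n (starWitness n) = (n : ℤ) ^ 2 + 4 * n + 1 := by
  have hc : starWitness n ⟨n, by omega⟩ = decide (n % 2 = 0) := by
    simp [starWitness]
  have hw : ∀ w : Fin n, starWitness n ⟨n + 1 + w.val, by have := w.isLt; omega⟩
      = !(decide (n % 2 = 0)) := by
    intro w
    show (if n + 1 + w.val < n then true
      else if n + 1 + w.val = n then decide (n % 2 = 0) else !(decide (n % 2 = 0)))
        = !(decide (n % 2 = 0))
    rw [if_neg (by omega), if_neg (by omega)]
  have hu : ∀ u : Fin n, starWitness n ⟨u.val, by have := u.isLt; omega⟩ = true := by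
    intro u
    show (if u.val < n then true else _) = true
    rw [if_pos u.isLt]
  unfold starFitness
  simp only [hc, hw, hu]
  by_cases hn : n % 2 = 0
  · simp only [hn, decide_true]
    simp only [ne_eq, Bool.not_true, Bool.true_eq_false, not_false_iff, if_true,
      and_false, true_and, false_and, if_false, if_pos rfl, true_and]
    rw [star_sum_parity 0 (2 * (n : ℤ) + 2) n]
    simp only [Finset.sum_const, Finset.card_univ, Fintype.card_fin, nsmul_eq_mul,
      mul_one]
    have hd : ((n / 2 : ℕ) : ℤ) * 2 = n := by
      have : n / 2 * 2 = n := by omega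
      exact_mod_cast this
    nlinarith [hd]
  · simp only [hn, decide_false]
    simp only [ne_eq, Bool.not_false, Bool.false_eq_true, if_false, true_and,
      if_pos rfl, not_false_iff, if_true]
    rw [star_sum_parity (2 * (n : ℤ) + 2) 0 n]
    simp only [Finset.sum_const, Finset.card_univ, Fintype.card_fin, nsmul_eq_mul,
      mul_one]
    have hd : (((n + 1) / 2 : ℕ) : ℤ) * 2 = (n : ℤ) + 1 := by
      have : (n + 1) / 2 * 2 = n + 1 := by omega
      exact_mod_cast this
    nlinarith [hd]

/-- The maximum fitness value of the star VCSP equals `n² + 4n + 1`. -/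
theorem star_max_fitness (n : ℕ) :
    IsGreatest (Set.range (starFitness n)) ((n : ℤ) ^ 2 + 4 * n + 1) := by
  constructor
  · exact ⟨starWitness n, star_witness_val n⟩
  · rintro y ⟨x, rfl⟩
    exact star_ub n x
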